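/- Let f₁ : ℝ^{|I₁|} → ℝ be continuous, homogeneous of degree 2d with d ≥ 1, and suppose there is ε > 0 and a continuous f₂ such that f₁(ξ,y) + f₂(y,z) ≥ ε‖(ξ,y,z)‖₂^{2d} for all (ξ,y,z). Then for each fixed y, the function ξ ↦ f₁(ξ,y) − (ε/2)‖(ξ,y)‖₂^{2d} is coercive in ξ and hence attains its minimum, so h(y) := min_ξ { f₁(ξ,y) − (ε/2)‖(ξ,y)‖₂^{2d} } is well-defined. -/
import Mathlib


open Filter

theorem stmt_4 (a b c d : ℕ) (hd : 1 ≤ d) (ε : ℝ) (hε : 0 < ε)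
    (f₁ : EuclideanSpace ℝ (Fin a) × EuclideanSpace ℝ (Fin b) → ℝ)
    (f₂ : EuclideanSpace ℝ (Fin b) × EuclideanSpace ℝ (Fin c) → ℝ)
    (hc₁ : Continuous f₁) (hc₂ : Continuous f₂)
    (hhom₁ : ∀ (t : ℝ) ξ y, f₁ (t • ξ, t • y) = t ^ (2 * d) * f₁ (ξ, y))
    (hpos : ∀ ξ y z, ε * (‖ξ‖ ^ 2 + ‖y‖ ^ 2 + ‖z‖ ^ 2) ^ d ≤ f₁ (ξ, y) + f₂ (y, z)) :
    ∀ y : EuclideanSpace ℝ (Fin b),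
      Tendsto (fun ξ : EuclideanSpace ℝ (Fin a) =>
          f₁ (ξ, y) - ε / 2 * (‖ξ‖ ^ 2 + ‖y‖ ^ 2) ^ d) (cocompact _) atTop ∧
      ∃ ξ₀ : EuclideanSpace ℝ (Fin a), ∀ ξ : EuclideanSpace ℝ (Fin a),
        f₁ (ξ₀, y) - ε / 2 * (‖ξ₀‖ ^ 2 + ‖y‖ ^ 2) ^ d
          ≤ f₁ (ξ, y) - ε / 2 * (‖ξ‖ ^ 2 + ‖y‖ ^ 2) ^ d := by
  intro y
  set C : ℝ := f₂ (y, 0) with hC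
  -- lower bound
  have key : ∀ ξ : EuclideanSpace ℝ (Fin a),
      ε / 2 * ‖ξ‖ ^ (2 * d) - C ≤ f₁ (ξ, y) - ε / 2 * (‖ξ‖ ^ 2 + ‖y‖ ^ 2) ^ d := by
    intro ξ
    have h1 := hpos ξ y 0
    simp only [norm_zero, ne_eq, OfNat.ofNat_ne_zero, not_false_eq_true, zero_pow, add_zero] at h1
    have hmono : ‖ξ‖ ^ 2 ≤ ‖ξ‖ ^ 2 + ‖y‖ ^ 2 := le_add_of_nonneg_right (by positivity)
    have h2 : (‖ξ‖ ^ 2) ^ d ≤ (‖ξ‖ ^ 2 + ‖y‖ ^ 2) ^ d :=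
      pow_le_pow_left₀ (by positivity) hmono d
    have h3 : ‖ξ‖ ^ (2 * d) = (‖ξ‖ ^ 2) ^ d := by rw [pow_mul]
    nlinarith [h2, h1]
  have hcoer : Tendsto (fun ξ : EuclideanSpace ℝ (Fin a) =>
      f₁ (ξ, y) - ε / 2 * (‖ξ‖ ^ 2 + ‖y‖ ^ 2) ^ d) (cocompact _) atTop := by
    apply tendsto_atTop_mono key
    have h1 : Tendsto (fun ξ : EuclideanSpace ℝ (Fin a) => ‖ξ‖ ^ (2 * d))
        (cocompact _) atTop :=
      (tendsto_pow_atTop (by omega)).comp tendsto_norm_cocompact_atTop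
    have h2 := (tendsto_const_mul_atTop_of_pos (by positivity : (0:ℝ) < ε / 2)).2 h1
    exact tendsto_atTop_add_const_right _ (-C) h2 |>.congr (fun ξ => by ring)
  refine ⟨hcoer, ?_⟩
  have hcont : Continuous (fun ξ : EuclideanSpace ℝ (Fin a) =>
      f₁ (ξ, y) - ε / 2 * (‖ξ‖ ^ 2 + ‖y‖ ^ 2) ^ d) := by
    fun_prop
  exact hcont.exists_forall_le hcoer
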